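/- (Proposition 3.4) Let (Λ^k, z^k, w^k), ε_k be a singular sequence of normalized central configurations of the N-vortex problem with vorticities Γ_1, …, Γ_N ∈ ℝ∖{0}. Suppose the vertices 1, 2, 3, 4 form a fully z-stroked sub-diagram isolated in the z-diagram: w^k_i − w^k_j ≈ ε_k² for all pairs i < j in {1,2,3,4}, and ε_k² ≺ w^k_i − w^k_l for all i ∈ {1,2,3,4} and l ∉ {1,2,3,4}; and suppose none of the vertices 1, 2, 3, 4 is z-circled: z^k_j ≺ ε_k^{-2} for j ∈ {1,2,3,4}. Then L₁₂₃₄ = Γ_1Γ_2 + Γ_2Γ_3 + Γ_3Γ_1 + Γ_4(Γ_1 + Γ_2 + Γ_3) = 0. -/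

import Mathlib

open Finset Filter Topology

/-- Normalized central configuration of the planar N-vortex problem (N = M + 2),
in the complexified variables (Λ, z, w), with the normalizations removing the
translation, rotation and dilation freedoms. -/
def IsNCC {M : ℕ} (Γ : Fin (M + 2) → ℝ) (Λ : ℂ) (z w : Fin (M + 2) → ℂ) : Prop :=
  Λ ≠ 0 ∧ Function.Injective z ∧ Function.Injective w ∧
  (∀ n, Λ * z n =
    ∑ j ∈ Finset.univ.filter (fun j => j ≠ n), (Γ j : ℂ) / (w n - w j)) ∧
  (∀ n, Λ⁻¹ * w n =
    ∑ j ∈ Finset.univ.filter (fun j => j ≠ n), (Γ j : ℂ) / (z n - z j)) ∧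
  z 1 - z 0 = w 1 - w 0

/-- max(max_n |z_n|, max_{i ≠ j} |w_i − w_j|⁻¹). -/
noncomputable def bigSup {M : ℕ} (z w : Fin (M + 2) → ℂ) : ℝ :=
  sSup ({r | ∃ n, r = ‖z n‖} ∪
        {r | ∃ i j, i ≠ j ∧ r = (‖w i - w j‖)⁻¹})

/-- a ≺ b : the ratio a/b tends to 0. -/
def Prec (a b : ℕ → ℂ) : Prop := Tendsto (fun k => a k / b k) atTop (nhds 0)

/-- a ⪯ b : the ratio a/b is bounded. -/
def BddRatio (a b : ℕ → ℂ) : Prop := ∃ C : ℝ, ∀ k, ‖a k / b k‖ ≤ C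

/-- a ≈ b : both a/b and b/a are bounded. -/
def SimEq (a b : ℕ → ℂ) : Prop := BddRatio a b ∧ BddRatio b a

/-- A singular sequence of normalized central configurations: |Λ^k| = 1,
ε_k > 0 tends to 0, and the maximal components of 𝒵 and 𝒲 both equal ε_k⁻². -/
def IsSingularSeq {M : ℕ} (Γ : Fin (M + 2) → ℝ) (Λ : ℕ → ℂ)
    (z w : ℕ → Fin (M + 2) → ℂ) (ε : ℕ → ℝ) : Prop :=
  (∀ k, IsNCC Γ (Λ k) (z k) (w k)) ∧
  (∀ k, ‖Λ k‖ = 1) ∧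
  (∀ k, 0 < ε k) ∧ Tendsto ε atTop (nhds 0) ∧
  (∀ k, bigSup (z k) (w k) = ε k ^ (-2 : ℤ)) ∧
  (∀ k, bigSup (w k) (z k) = ε k ^ (-2 : ℤ))

/-- Proposition 3.4: a fully z-stroked isolated sub-diagram on four vertices
(1, 2, 3, 4, here indices 0, 1, 2, 3) with no z-circled vertex forces L₁₂₃₄ = 0. -/
theorem isolated_four_clique_no_circle
    {M : ℕ} (Γ : Fin (M + 4) → ℝ) (hΓ : ∀ j, Γ j ≠ 0)
    (Λ : ℕ → ℂ) (z w : ℕ → Fin (M + 4) → ℂ) (ε : ℕ → ℝ)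
    (hsing : IsSingularSeq Γ Λ z w ε)
    (hstroke : ∀ i ∈ ({0, 1, 2, 3} : Finset (Fin (M + 4))),
      ∀ j ∈ ({0, 1, 2, 3} : Finset (Fin (M + 4))), i ≠ j →
        SimEq (fun k => w k i - w k j) (fun k => ((ε k : ℂ)) ^ 2))
    (hiso : ∀ i ∈ ({0, 1, 2, 3} : Finset (Fin (M + 4))),
      ∀ l ∉ ({0, 1, 2, 3} : Finset (Fin (M + 4))),
        Prec (fun k => ((ε k : ℂ)) ^ 2) (fun k => w k i - w k l))
    (hnocirc : ∀ j ∈ ({0, 1, 2, 3} : Finset (Fin (M + 4))),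
      Prec (fun k => z k j) (fun k => ((ε k ^ (-2 : ℤ) : ℝ) : ℂ))) :
    Γ 0 * Γ 1 + Γ 1 * Γ 2 + Γ 2 * Γ 0 + Γ 3 * (Γ 0 + Γ 1 + Γ 2) = 0 := by
  obtain ⟨hncc, hΛ1, hεpos, hεto, -, -⟩ := hsing
  have i01 : (0:Fin (M+4)) ≠ 1 := Fin.ne_of_val_ne (by show (0:ℕ) ≠ 1; omega)
  have i02 : (0:Fin (M+4)) ≠ 2 := Fin.ne_of_val_ne (by show (0:ℕ) ≠ 2; omega)
  have i03 : (0:Fin (M+4)) ≠ 3 := Fin.ne_of_val_ne (by show (0:ℕ) ≠ 3; omega)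
  have i12 : (1:Fin (M+4)) ≠ 2 := Fin.ne_of_val_ne (by show (1:ℕ) ≠ 2; omega)
  have i13 : (1:Fin (M+4)) ≠ 3 := Fin.ne_of_val_ne (by show (1:ℕ) ≠ 3; omega)
  have i23 : (2:Fin (M+4)) ≠ 3 := Fin.ne_of_val_ne (by show (2:ℕ) ≠ 3; omega)
  set C : Finset (Fin (M+4)) := {0,1,2,3} with hCdef
  have h0C : (0:Fin (M+4)) ∈ C := by rw [hCdef]; simp
  have h1C : (1:Fin (M+4)) ∈ C := by rw [hCdef]; simp
  have h2C : (2:Fin (M+4)) ∈ C := by rw [hCdef]; simp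
  have h3C : (3:Fin (M+4)) ∈ C := by rw [hCdef]; simp
  have habsε : ∀ k, ‖(ε k:ℂ)^2‖ = ε k ^ 2 := fun k => by
    rw [norm_pow, Complex.norm_real, Real.norm_eq_abs, abs_of_pos (hεpos k)]
  -- uniform bound |w_n - w_0| ≤ c ε²
  have hbdd : ∀ n ∈ C, ∃ c : ℝ, 0 ≤ c ∧ ∀ k, ‖w k n - w k 0‖ ≤ c * ε k ^ 2 := by
    intro n hn
    by_cases hn0 : n = 0
    · exact ⟨0, le_refl 0, fun k => by simp [hn0]⟩
    · obtain ⟨⟨c, hc⟩, -⟩ := hstroke n hn 0 h0C hn0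
      refine ⟨max c 0, le_max_right _ _, fun k => ?_⟩
      have h1 := hc k
      rw [norm_div, habsε k, div_le_iff₀ (pow_pos (hεpos k) 2)] at h1
      calc ‖w k n - w k 0‖ ≤ c * ε k ^ 2 := h1
        _ ≤ max c 0 * ε k ^ 2 := by
            have := le_max_left c 0
            nlinarith [sq_nonneg (ε k)]
  -- first family of terms tends to 0
  have hterm1 : ∀ n ∈ C, Tendsto
      (fun k => (Γ n : ℂ) * (Λ k * z k n) * (w k n - w k 0)) atTop (𝓝 0) := by
    intro n hn
    obtain ⟨c, hc0, hc⟩ := hbdd n hn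
    have hz : Tendsto (fun k => z k n * (ε k:ℂ)^2) atTop (𝓝 0) := by
      have hzz := hnocirc n hn
      unfold Prec at hzz
      refine hzz.congr fun k => ?_
      have her : ε k ^ (-2:ℤ) = (ε k ^ 2)⁻¹ := by
        rw [zpow_neg, zpow_two, pow_two]
      show z k n / ((ε k ^ (-2:ℤ) : ℝ) : ℂ) = z k n * (ε k:ℂ)^2
      rw [her]
      push_cast
      rw [div_inv_eq_mul]
    rw [tendsto_zero_iff_norm_tendsto_zero]
    have hbnd : Tendsto (fun k => |Γ n| * c * ‖z k n * (ε k:ℂ)^2‖)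
        atTop (𝓝 0) := by
      have := (hz.norm).const_mul (|Γ n| * c)
      simpa using this
    refine squeeze_zero (fun k => norm_nonneg _) (fun k => ?_) hbnd
    have hΛk := hΛ1 k
    calc ‖(Γ n : ℂ) * (Λ k * z k n) * (w k n - w k 0)‖
        = |Γ n| * ‖z k n‖ * ‖w k n - w k 0‖ := by
          simp [norm_mul, hΛk, Complex.norm_real]
      _ ≤ |Γ n| * ‖z k n‖ * (c * ε k ^ 2) :=
          mul_le_mul_of_nonneg_left (hc k) (by positivity)
      _ = |Γ n| * c * ‖z k n * (ε k:ℂ)^2‖ := by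
          rw [norm_mul, habsε k]; ring
  -- second family of terms tends to 0
  have hterm2 : ∀ n ∈ C, ∀ l ∈ Finset.univ.filter (fun l => l ∉ C), Tendsto
      (fun k => (Γ n : ℂ) * (Γ l : ℂ) * ((w k n - w k 0) / (w k n - w k l)))
      atTop (𝓝 0) := by
    intro n hn l hl
    obtain ⟨c, hc0, hc⟩ := hbdd n hn
    have hlC : l ∉ C := by simpa using hl
    have hpr := hiso n hn l hlC
    unfold Prec at hpr
    rw [tendsto_zero_iff_norm_tendsto_zero]
    have hbnd : Tendsto
        (fun k => |Γ n| * |Γ l| * c * ‖(ε k:ℂ)^2 / (w k n - w k l)‖)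
        atTop (𝓝 0) := by
      have := (hpr.norm).const_mul (|Γ n| * |Γ l| * c)
      simpa using this
    refine squeeze_zero (fun k => norm_nonneg _) (fun k => ?_) hbnd
    calc ‖(Γ n : ℂ) * (Γ l : ℂ) * ((w k n - w k 0) / (w k n - w k l))‖
        = |Γ n| * |Γ l| * (‖w k n - w k 0‖ * (‖w k n - w k l‖)⁻¹) := by
          simp [norm_mul, norm_div, Complex.norm_real, div_eq_mul_inv]
      _ ≤ |Γ n| * |Γ l| * ((c * ε k ^ 2) * (‖w k n - w k l‖)⁻¹) :=
          mul_le_mul_of_nonneg_left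
            (mul_le_mul_of_nonneg_right (hc k)
              (inv_nonneg.2 (norm_nonneg _))) (by positivity)
      _ = |Γ n| * |Γ l| * c * ‖(ε k:ℂ)^2 / (w k n - w k l)‖ := by
          rw [norm_div, habsε k, div_eq_mul_inv]; ring
  -- both sums tend to 0
  have hsum1 : Tendsto
      (fun k => ∑ n ∈ C, (Γ n : ℂ) * (Λ k * z k n) * (w k n - w k 0)) atTop (𝓝 0) := by
    have := tendsto_finset_sum C (fun n hn => hterm1 n hn)
    simpa using this
  have hsum2 : Tendsto
      (fun k => ∑ n ∈ C, ∑ l ∈ Finset.univ.filter (fun l => l ∉ C),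
        (Γ n : ℂ) * (Γ l : ℂ) * ((w k n - w k 0) / (w k n - w k l))) atTop (𝓝 0) := by
    have houter : ∀ n ∈ C, Tendsto
        (fun k => ∑ l ∈ Finset.univ.filter (fun l => l ∉ C),
          (Γ n : ℂ) * (Γ l : ℂ) * ((w k n - w k 0) / (w k n - w k l))) atTop (𝓝 0) := by
      intro n hn
      have := tendsto_finset_sum (Finset.univ.filter (fun l => l ∉ C))
        (fun l hl => hterm2 n hn l hl)
      simpa using this
    have := tendsto_finset_sum C houter
    simpa using this
  have hS : Tendsto
      (fun k => (∑ n ∈ C, (Γ n : ℂ) * (Λ k * z k n) * (w k n - w k 0))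
        - ∑ n ∈ C, ∑ l ∈ Finset.univ.filter (fun l => l ∉ C),
          (Γ n : ℂ) * (Γ l : ℂ) * ((w k n - w k 0) / (w k n - w k l))) atTop (𝓝 0) := by
    simpa using hsum1.sub hsum2
  -- the key algebraic identity
  have key : ∀ k, ((Γ 0 * Γ 1 + Γ 1 * Γ 2 + Γ 2 * Γ 0 + Γ 3 * (Γ 0 + Γ 1 + Γ 2) : ℝ) : ℂ)
      = (∑ n ∈ C, (Γ n : ℂ) * (Λ k * z k n) * (w k n - w k 0))
        - ∑ n ∈ C, ∑ l ∈ Finset.univ.filter (fun l => l ∉ C),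
          (Γ n : ℂ) * (Γ l : ℂ) * ((w k n - w k 0) / (w k n - w k l)) := by
    intro k
    obtain ⟨-, -, hwinj, heq1, -, -⟩ := hncc k
    have hw : ∀ i j : Fin (M+4), i ≠ j → w k i - w k j ≠ 0 := fun i j h =>
      sub_ne_zero.mpr (fun e => h (hwinj e))
    have expand : ∀ n ∈ C, (Γ n : ℂ) * (Λ k * z k n) * (w k n - w k 0)
        = (∑ j ∈ C, if j ≠ n then
              (Γ n : ℂ) * (Γ j : ℂ) * ((w k n - w k 0) / (w k n - w k j)) else 0)
          + ∑ l ∈ Finset.univ.filter (fun l => l ∉ C),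
              (Γ n : ℂ) * (Γ l : ℂ) * ((w k n - w k 0) / (w k n - w k l)) := by
      intro n hn
      have e1 : (Γ n : ℂ) * (Λ k * z k n) * (w k n - w k 0)
          = ∑ j ∈ Finset.univ.filter (fun j => j ≠ n),
              (Γ n : ℂ) * (Γ j : ℂ) * ((w k n - w k 0) / (w k n - w k j)) := by
        rw [heq1 n, Finset.mul_sum, Finset.sum_mul]
        exact Finset.sum_congr rfl fun j _ => by ring
      rw [e1, ← Finset.sum_filter_add_sum_filter_not
        (Finset.univ.filter (fun j => j ≠ n)) (fun j => j ∈ C)]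
      congr 1
      · rw [← Finset.sum_filter, Finset.filter_filter]
        apply Finset.sum_congr _ (fun _ _ => rfl)
        ext j
        simp [and_comm]
      · apply Finset.sum_congr _ (fun _ _ => rfl)
        rw [Finset.filter_filter]
        ext j
        simp only [Finset.mem_filter, Finset.mem_univ, true_and]
        constructor
        · exact fun h => h.2
        · intro h
          exact ⟨by rintro rfl; exact h hn, h⟩
    rw [Finset.sum_congr rfl expand, Finset.sum_add_distrib, add_sub_assoc, sub_self, add_zero]
    have hCsum : ∀ f : Fin (M+4) → ℂ, ∑ n ∈ C, f n = f 0 + f 1 + f 2 + f 3 := by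
      intro f
      rw [hCdef, Finset.sum_insert (by simp [i01, i02, i03]),
        Finset.sum_insert (by simp [i12, i13]),
        Finset.sum_insert (by simp [i23]), Finset.sum_singleton]
      ring
    rw [hCsum]
    simp only [hCsum]
    have i10 := i01.symm; have i20 := i02.symm; have i30 := i03.symm
    have i21 := i12.symm; have i31 := i13.symm; have i32 := i23.symm
    simp only [ne_eq, i01, i02, i03, i12, i13, i23, i10, i20, i30, i21, i31, i32,
      not_false_eq_true, ite_true, not_true_eq_false, ite_false, if_true, if_false,
      sub_self, zero_div, mul_zero, add_zero, zero_add]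
    push_cast
    field_simp [hw 0 1 i01, hw 0 2 i02, hw 0 3 i03, hw 1 0 i10, hw 1 2 i12, hw 1 3 i13,
      hw 2 0 i20, hw 2 1 i21, hw 2 3 i23, hw 3 0 i30, hw 3 1 i31, hw 3 2 i32]
    ring
  have hconst : Tendsto
      (fun _ : ℕ => ((Γ 0 * Γ 1 + Γ 1 * Γ 2 + Γ 2 * Γ 0 + Γ 3 * (Γ 0 + Γ 1 + Γ 2) : ℝ) : ℂ))
      atTop (𝓝 0) := hS.congr (fun k => (key k).symm)
  have hL0 := tendsto_nhds_unique hconst tendsto_const_nhds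
  exact_mod_cast hL0.symm
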